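/- Let C > 0 and 1 ≤ p < 3. There exists a constant C' > 0 depending only on C and p such that for every convex element K(a,b,ã,b̃) satisfying conditions (Δ1) and (D2) with constant C: max{ a/b^{p−1}, b/a^{p−1} } · I_p(a,b,ã,b̃) ≤ C' · h / |l|^{p−1}. -/

import Mathlib

noncomputable section

/-- The Euclidean plane. -/
abbrev E2 := EuclideanSpace ℝ (Fin 2)

/-- The point (x, y) of the Euclidean plane. -/
def pt2 (x y : ℝ) : E2 := WithLp.toLp 2 ![x, y]

/-- The quadrilateral `K(a,b,ta,tb)` with vertices `(0,0), (a,0), (ta,tb), (0,b)`. -/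
def quadK (a b ta tb : ℝ) : Set E2 :=
  convexHull ℝ {pt2 0 0, pt2 a 0, pt2 ta tb, pt2 0 b}

/-- Length of the side `l` joining `V3 = (ta, tb)` and `V4 = (0, b)` of `K(a,b,ta,tb)`. -/
def lenl (b ta tb : ℝ) : ℝ := Real.sqrt (ta ^ 2 + (b - tb) ^ 2)

/-- The sine of the interior angle α at `V4 = (0,b)` of the triangle with vertices
`V2 = (a,0)`, `V3 = (ta,tb)`, `V4 = (0,b)`. -/
def sinAlpha (a b ta tb : ℝ) : ℝ :=
  Real.sin (EuclideanGeometry.angle (pt2 a 0) (pt2 0 b) (pt2 ta tb))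

/-- The quantity `I_p(a,b,ta,tb)`. -/
def Ip (p a b ta tb : ℝ) : ℝ :=
  ∫ z in (Set.Icc (0:ℝ) 1) ×ˢ (Set.Icc (0:ℝ) 1),
    (1 + z.1 * (tb / b - 1) + z.2 * (ta / a - 1)) ^ (-(p - 1))

open MeasureTheory Set


lemma intOn_rpow {e : ℝ} (he1 : e < 1) :
    IntegrableOn (fun x : ℝ => x ^ (-e)) (Icc (0:ℝ) 1) volume := by
  rw [integrableOn_Icc_iff_integrableOn_Ioc]
  exact (intervalIntegral.intervalIntegrable_rpow' (by linarith)).1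

lemma intOn_rpow' {e : ℝ} (he1 : e < 1) :
    IntegrableOn (fun y : ℝ => (1 - y) ^ (-e)) (Icc (0:ℝ) 1) volume := by
  rw [integrableOn_Icc_iff_integrableOn_Ioc]
  have := ((intervalIntegral.intervalIntegrable_rpow' (r := -e) (by linarith)
    (a := 0) (b := 1)).comp_sub_left 1).symm
  simpa [intervalIntegrable_iff, uIoc_of_le (by norm_num : (0:ℝ) ≤ 1)] using this

lemma intval_rpow {e : ℝ} (he1 : e < 1) :
    ∫ x in Icc (0:ℝ) 1, x ^ (-e) = 1 / (1 - e) := by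
  rw [integral_Icc_eq_integral_Ioc, ← intervalIntegral.integral_of_le zero_le_one,
    integral_rpow (Or.inl (by linarith)), Real.one_rpow, Real.zero_rpow (by linarith)]
  ring

lemma intval_rpow' {e : ℝ} (he1 : e < 1) :
    ∫ y in Icc (0:ℝ) 1, (1 - y) ^ (-e) = 1 / (1 - e) := by
  rw [integral_Icc_eq_integral_Ioc, ← intervalIntegral.integral_of_le zero_le_one]
  have := intervalIntegral.integral_comp_sub_left (a := 0) (b := 1) (fun x : ℝ => x ^ (-e)) 1
  simp only [sub_zero, sub_self] at this
  rw [this, integral_rpow (Or.inl (by linarith)), Real.one_rpow, Real.zero_rpow (by linarith)]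
  ring


lemma base_pos {s t x y : ℝ} (hs : -1 < s) (ht : -1 < t) (hst : 0 < 1 + s + t)
    (hx : x ∈ Icc (0:ℝ) 1) (hy : y ∈ Icc (0:ℝ) 1) : 0 < 1 + x * s + y * t := by
  obtain ⟨hx0, hx1⟩ := hx; obtain ⟨hy0, hy1⟩ := hy
  set m := min (min 1 (1+s)) (min (1+t) (1+s+t)) with hm
  have hmpos : 0 < m := lt_min (lt_min one_pos (by linarith)) (lt_min (by linarith) hst)
  have w1 : (0:ℝ) ≤ (1-x)*(1-y) := mul_nonneg (by linarith) (by linarith)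
  have w2 : (0:ℝ) ≤ x*(1-y) := mul_nonneg hx0 (by linarith)
  have w3 : (0:ℝ) ≤ (1-x)*y := mul_nonneg (by linarith) hy0
  have w4 : (0:ℝ) ≤ x*y := mul_nonneg hx0 hy0
  have key : 1 + x*s + y*t = (1-x)*(1-y)*1 + x*(1-y)*(1+s) + (1-x)*y*(1+t) + x*y*(1+s+t) := by
    ring
  have m1 : m ≤ 1 := le_trans (min_le_left _ _) (min_le_left _ _)
  have m2 : m ≤ 1+s := le_trans (min_le_left _ _) (min_le_right _ _)
  have m3 : m ≤ 1+t := le_trans (min_le_right _ _) (min_le_left _ _)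
  have m4 : m ≤ 1+s+t := le_trans (min_le_right _ _) (min_le_right _ _)
  have t1 : (1-x)*(1-y)*m ≤ (1-x)*(1-y)*1 := mul_le_mul_of_nonneg_left m1 w1
  have t2 : x*(1-y)*m ≤ x*(1-y)*(1+s) := mul_le_mul_of_nonneg_left m2 w2
  have t3 : (1-x)*y*m ≤ (1-x)*y*(1+t) := mul_le_mul_of_nonneg_left m3 w3
  have t4 : x*y*m ≤ x*y*(1+s+t) := mul_le_mul_of_nonneg_left m4 w4
  have hsum : (1-x)*(1-y)*m + x*(1-y)*m + (1-x)*y*m + x*y*m = m := by ring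
  linarith

set_option maxHeartbeats 1000000 in
lemma key_int {q s t : ℝ} (hq0 : 0 ≤ q) (hq2 : q < 2) (hs : -1 < s) (ht : -1 < t)
    (hst : 0 < 1 + s + t) :
    ∫ z in (Icc (0:ℝ) 1) ×ˢ (Icc (0:ℝ) 1), (1 + z.1 * s + z.2 * t) ^ (-q) ≤
      (1 / (1 - q / 2)) ^ 2 * (min (1 + s + t) 1) ^ (-q) := by
  have hq2' : (0:ℝ) < 1 - q / 2 := by linarith
  set S := (Icc (0:ℝ) 1) ×ˢ (Icc (0:ℝ) 1) with hS
  set δ₁ := min (1 + s + t) 1 with hδ₁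
  have hδ₁pos : 0 < δ₁ := lt_min hst one_pos
  have hδ₁le : δ₁ ≤ 1 := min_le_right _ _
  have hδ₁q : (0:ℝ) < δ₁ ^ (-q) := Real.rpow_pos_of_pos hδ₁pos _
  have honeδ : (1:ℝ) ≤ δ₁ ^ (-q) :=
    Real.one_le_rpow_of_pos_of_le_one_of_nonpos hδ₁pos hδ₁le (by linarith)
  have hκ1 : (1:ℝ) ≤ 1 / (1 - q / 2) := (one_le_div hq2').2 (by linarith)
  have hκ : (1:ℝ) ≤ (1 / (1 - q / 2)) ^ 2 := one_le_pow₀ hκ1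
  have hSmeas : MeasurableSet S := measurableSet_Icc.prod measurableSet_Icc
  have hvolS : volume S = 1 := by
    rw [hS, Measure.volume_eq_prod, Measure.prod_prod, Real.volume_Icc]
    norm_num
  have hf0 : 0 ≤ᵐ[volume.restrict S]
      fun z : ℝ × ℝ => (1 + z.1 * s + z.2 * t) ^ (-q) := by
    filter_upwards [self_mem_ae_restrict hSmeas] with z hz
    exact Real.rpow_nonneg (base_pos hs ht hst hz.1 hz.2).le _
  -- helper: bound by a constant
  have const_bound : ∀ c : ℝ, 0 < c → (∀ z : ℝ × ℝ, z ∈ S → c ≤ 1 + z.1 * s + z.2 * t) →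
      ∫ z in S, (1 + z.1 * s + z.2 * t) ^ (-q) ≤ c ^ (-q) := by
    intro c hc hcz
    have hmono : ∫ z in S, (1 + z.1 * s + z.2 * t) ^ (-q) ≤ ∫ _z in S, c ^ (-q) := by
      refine integral_mono_of_nonneg hf0 ?_ ?_
      · exact integrableOn_const (by rw [hvolS]; exact ENNReal.one_ne_top)
      · filter_upwards [self_mem_ae_restrict hSmeas] with z hz
        exact Real.rpow_le_rpow_of_nonpos hc (hcz z hz) (by linarith)
    rw [setIntegral_const, measureReal_def, hvolS] at hmono
    simpa using hmono
  -- a.e. coordinate facts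
  have hnull1 : (volume : Measure (ℝ × ℝ)) {z | z.1 = 0} = 0 := by
    have h : {z : ℝ × ℝ | z.1 = 0} = ({0} : Set ℝ) ×ˢ (univ : Set ℝ) := by
      ext ⟨z1, z2⟩; simp [eq_comm]
    rw [h, Measure.volume_eq_prod, Measure.prod_prod]
    simp
  have hnull2 : (volume : Measure (ℝ × ℝ)) {z | z.2 = 1} = 0 := by
    have h : {z : ℝ × ℝ | z.2 = 1} = (univ : Set ℝ) ×ˢ ({1} : Set ℝ) := by
      ext ⟨z1, z2⟩; simp [eq_comm]
    rw [h, Measure.volume_eq_prod, Measure.prod_prod]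
    simp
  have hnull3 : (volume : Measure (ℝ × ℝ)) {z | z.1 = 1} = 0 := by
    have h : {z : ℝ × ℝ | z.1 = 1} = ({1} : Set ℝ) ×ˢ (univ : Set ℝ) := by
      ext ⟨z1, z2⟩; simp [eq_comm]
    rw [h, Measure.volume_eq_prod, Measure.prod_prod]
    simp
  have hnull4 : (volume : Measure (ℝ × ℝ)) {z | z.2 = 0} = 0 := by
    have h : {z : ℝ × ℝ | z.2 = 0} = (univ : Set ℝ) ×ˢ ({0} : Set ℝ) := by
      ext ⟨z1, z2⟩; simp [eq_comm]
    rw [h, Measure.volume_eq_prod, Measure.prod_prod]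
    simp
  have hz1 : ∀ᵐ z : ℝ × ℝ ∂volume.restrict S, z.1 ≠ 0 := by
    refine ae_restrict_of_ae ?_
    rw [ae_iff]; simpa using hnull1
  have hz2 : ∀ᵐ z : ℝ × ℝ ∂volume.restrict S, z.2 ≠ 1 := by
    refine ae_restrict_of_ae ?_
    rw [ae_iff]; simpa using hnull2
  have hz3 : ∀ᵐ z : ℝ × ℝ ∂volume.restrict S, z.1 ≠ 1 := by
    refine ae_restrict_of_ae ?_
    rw [ae_iff]; simpa using hnull3
  have hz4 : ∀ᵐ z : ℝ × ℝ ∂volume.restrict S, z.2 ≠ 0 := by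
    refine ae_restrict_of_ae ?_
    rw [ae_iff]; simpa using hnull4
  set e := q / 2 with he
  have he1 : e < 1 := by rw [he]; linarith
  have he0 : 0 ≤ e := by rw [he]; linarith
  have hδe : (1 + s + t) ^ (-e) ≤ δ₁ ^ (-q) := by
    rcases le_total (1 + s + t) 1 with h | h
    · rw [hδ₁, min_eq_left h]
      exact Real.rpow_le_rpow_of_exponent_ge hst h (by rw [he]; linarith)
    · rw [hδ₁, min_eq_right h, Real.one_rpow]
      exact Real.rpow_le_one_of_one_le_of_nonpos h (by rw [he]; linarith)
  rcases le_or_gt s 0 with hs0 | hs0 <;> rcases le_or_gt t 0 with ht0 | ht0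
  · -- s ≤ 0, t ≤ 0 : bound by (1+s+t)^(-q)
    have h1 : ∫ z in S, (1 + z.1 * s + z.2 * t) ^ (-q) ≤ (1 + s + t) ^ (-q) := by
      refine const_bound _ hst ?_
      rintro z ⟨⟨hx0, hx1⟩, hy0, hy1⟩
      nlinarith
    have h2 : (1 + s + t) ^ (-q) ≤ δ₁ ^ (-q) :=
      Real.rpow_le_rpow_of_nonpos hδ₁pos (min_le_left _ _) (by linarith)
    calc ∫ z in S, (1 + z.1 * s + z.2 * t) ^ (-q) ≤ δ₁ ^ (-q) := h1.trans h2
      _ ≤ (1 / (1 - q / 2)) ^ 2 * δ₁ ^ (-q) := le_mul_of_one_le_left hδ₁q.le hκ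
  · -- s ≤ 0, t > 0 : mirror case C'
    have hB : (0:ℝ) < 1 + s := by linarith
    have hgi : Integrable (fun z : ℝ × ℝ => (1+s+t) ^ (-e) * ((1 - z.1) ^ (-e) * z.2 ^ (-e)))
        (volume.restrict S) := by
      have h := Integrable.mul_prod (intOn_rpow' (e := e) he1) (intOn_rpow (e := e) he1)
      rw [Measure.prod_restrict] at h
      rw [hS, Measure.volume_eq_prod]
      exact h.const_mul _
    have hmaj : (fun z : ℝ × ℝ => (1 + z.1 * s + z.2 * t) ^ (-q)) ≤ᵐ[volume.restrict S]
        fun z : ℝ × ℝ => (1+s+t) ^ (-e) * ((1 - z.1) ^ (-e) * z.2 ^ (-e)) := by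
      filter_upwards [self_mem_ae_restrict hSmeas, hz3, hz4] with z hz h1 h2
      obtain ⟨⟨hx0, hx1⟩, hy0, hy1⟩ := hz
      have hx : z.1 < 1 := lt_of_le_of_ne hx1 h1
      have hy : 0 < z.2 := hy0.lt_of_ne (Ne.symm h2)
      have hbase : 0 < 1 + z.1 * s + z.2 * t := base_pos hs ht hst ⟨hx0, hx1⟩ ⟨hy0, hy1⟩
      have hb1 : z.2 * (1+s+t) ≤ 1 + z.1 * s + z.2 * t := by nlinarith
      have hb2 : 1 - z.1 ≤ 1 + z.1 * s + z.2 * t := by nlinarith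
      have hP : 0 < (1+s+t) * ((1 - z.1) * z.2) := mul_pos hst (mul_pos (by linarith) hy)
      have hsq : (1+s+t) * ((1 - z.1) * z.2) ≤ (1 + z.1 * s + z.2 * t) ^ 2 := by nlinarith
      have hroot : Real.sqrt ((1+s+t) * ((1 - z.1) * z.2)) ≤ 1 + z.1 * s + z.2 * t := by
        rw [show (1 + z.1 * s + z.2 * t) = Real.sqrt ((1 + z.1 * s + z.2 * t) ^ 2) from
          (Real.sqrt_sq hbase.le).symm]
        exact Real.sqrt_le_sqrt hsq
      calc (1 + z.1 * s + z.2 * t) ^ (-q)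
          ≤ (Real.sqrt ((1+s+t) * ((1 - z.1) * z.2))) ^ (-q) :=
            Real.rpow_le_rpow_of_nonpos (Real.sqrt_pos.2 hP) hroot (by linarith)
        _ = ((1+s+t) * ((1 - z.1) * z.2)) ^ (-e) := by
            rw [Real.sqrt_eq_rpow, ← Real.rpow_mul hP.le]
            congr 1
            rw [he]; ring
        _ = (1+s+t) ^ (-e) * ((1 - z.1) ^ (-e) * z.2 ^ (-e)) := by
            rw [Real.mul_rpow hst.le (mul_nonneg (by linarith) hy0),
              Real.mul_rpow (by linarith : (0:ℝ) ≤ 1 - z.1) hy.le]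
    have hIle := integral_mono_of_nonneg hf0 hgi hmaj
    have hval : ∫ z in S, (1+s+t) ^ (-e) * ((1 - z.1) ^ (-e) * z.2 ^ (-e))
        = (1+s+t) ^ (-e) * (1 / (1 - e) * (1 / (1 - e))) := by
      rw [integral_const_mul]
      congr 1
      rw [hS, Measure.volume_eq_prod]
      have hv2 := setIntegral_prod_mul (μ := (volume : Measure ℝ)) (ν := (volume : Measure ℝ))
        (fun x : ℝ => (1 - x) ^ (-e)) (fun y : ℝ => y ^ (-e)) (Icc (0:ℝ) 1) (Icc (0:ℝ) 1)
      exact hv2.trans (by rw [intval_rpow' he1, intval_rpow he1])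
    rw [hval] at hIle
    refine hIle.trans ?_
    calc (1+s+t) ^ (-e) * (1 / (1 - e) * (1 / (1 - e)))
        = (1 / (1 - e)) ^ 2 * (1+s+t) ^ (-e) := by ring
      _ ≤ (1 / (1 - e)) ^ 2 * δ₁ ^ (-q) := by
          exact mul_le_mul_of_nonneg_left hδe (sq_nonneg _)
      _ = (1 / (1 - q / 2)) ^ 2 * δ₁ ^ (-q) := by rw [he]
  · -- s > 0, t ≤ 0 : case C
    have hB : (0:ℝ) < 1 + t := by linarith
    have hgi : Integrable (fun z : ℝ × ℝ => (1+s+t) ^ (-e) * (z.1 ^ (-e) * (1 - z.2) ^ (-e)))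
        (volume.restrict S) := by
      have h := Integrable.mul_prod (intOn_rpow (e := e) he1) (intOn_rpow' (e := e) he1)
      rw [Measure.prod_restrict] at h
      rw [hS, Measure.volume_eq_prod]
      exact h.const_mul _
    have hmaj : (fun z : ℝ × ℝ => (1 + z.1 * s + z.2 * t) ^ (-q)) ≤ᵐ[volume.restrict S]
        fun z : ℝ × ℝ => (1+s+t) ^ (-e) * (z.1 ^ (-e) * (1 - z.2) ^ (-e)) := by
      filter_upwards [self_mem_ae_restrict hSmeas, hz1, hz2] with z hz h1 h2
      obtain ⟨⟨hx0, hx1⟩, hy0, hy1⟩ := hz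
      have hx : 0 < z.1 := hx0.lt_of_ne (Ne.symm h1)
      have hy : z.2 < 1 := lt_of_le_of_ne hy1 h2
      have hbase : 0 < 1 + z.1 * s + z.2 * t := base_pos hs ht hst ⟨hx0, hx1⟩ ⟨hy0, hy1⟩
      have hb1 : z.1 * (1+s+t) ≤ 1 + z.1 * s + z.2 * t := by nlinarith
      have hb2 : 1 - z.2 ≤ 1 + z.1 * s + z.2 * t := by nlinarith
      have hP : 0 < (1+s+t) * (z.1 * (1 - z.2)) := mul_pos hst (mul_pos hx (by linarith))
      have hsq : (1+s+t) * (z.1 * (1 - z.2)) ≤ (1 + z.1 * s + z.2 * t) ^ 2 := by nlinarith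
      have hroot : Real.sqrt ((1+s+t) * (z.1 * (1 - z.2))) ≤ 1 + z.1 * s + z.2 * t := by
        rw [show (1 + z.1 * s + z.2 * t) = Real.sqrt ((1 + z.1 * s + z.2 * t) ^ 2) from
          (Real.sqrt_sq hbase.le).symm]
        exact Real.sqrt_le_sqrt hsq
      calc (1 + z.1 * s + z.2 * t) ^ (-q)
          ≤ (Real.sqrt ((1+s+t) * (z.1 * (1 - z.2)))) ^ (-q) :=
            Real.rpow_le_rpow_of_nonpos (Real.sqrt_pos.2 hP) hroot (by linarith)
        _ = ((1+s+t) * (z.1 * (1 - z.2))) ^ (-e) := by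
            rw [Real.sqrt_eq_rpow, ← Real.rpow_mul hP.le]
            congr 1
            rw [he]; ring
        _ = (1+s+t) ^ (-e) * (z.1 ^ (-e) * (1 - z.2) ^ (-e)) := by
            rw [Real.mul_rpow hst.le (mul_nonneg hx0 (by linarith)),
              Real.mul_rpow hx.le (by linarith : (0:ℝ) ≤ 1 - z.2)]
    have hIle := integral_mono_of_nonneg hf0 hgi hmaj
    have hval : ∫ z in S, (1+s+t) ^ (-e) * (z.1 ^ (-e) * (1 - z.2) ^ (-e))
        = (1+s+t) ^ (-e) * (1 / (1 - e) * (1 / (1 - e))) := by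
      rw [integral_const_mul]
      congr 1
      rw [hS, Measure.volume_eq_prod]
      have hv2 := setIntegral_prod_mul (μ := (volume : Measure ℝ)) (ν := (volume : Measure ℝ))
        (fun x : ℝ => x ^ (-e)) (fun y : ℝ => (1 - y) ^ (-e)) (Icc (0:ℝ) 1) (Icc (0:ℝ) 1)
      exact hv2.trans (by rw [intval_rpow he1, intval_rpow' he1])
    rw [hval] at hIle
    refine hIle.trans ?_
    calc (1+s+t) ^ (-e) * (1 / (1 - e) * (1 / (1 - e)))
        = (1 / (1 - e)) ^ 2 * (1+s+t) ^ (-e) := by ring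
      _ ≤ (1 / (1 - e)) ^ 2 * δ₁ ^ (-q) := by
          exact mul_le_mul_of_nonneg_left hδe (sq_nonneg _)
      _ = (1 / (1 - q / 2)) ^ 2 * δ₁ ^ (-q) := by rw [he]
  · -- s > 0, t > 0 : bound by 1
    have h1 : ∫ z in S, (1 + z.1 * s + z.2 * t) ^ (-q) ≤ (1:ℝ) ^ (-q) := by
      refine const_bound _ one_pos ?_
      rintro z ⟨⟨hx0, hx1⟩, hy0, hy1⟩
      nlinarith
    rw [Real.one_rpow] at h1
    calc ∫ z in S, (1 + z.1 * s + z.2 * t) ^ (-q) ≤ 1 := h1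
      _ ≤ δ₁ ^ (-q) := honeδ
      _ ≤ (1 / (1 - q / 2)) ^ 2 * δ₁ ^ (-q) := le_mul_of_one_le_left hδ₁q.le hκ

@[simp] lemma pt2_app0 (x y : ℝ) : pt2 x y 0 = x := rfl
@[simp] lemma pt2_app1 (x y : ℝ) : pt2 x y 1 = y := rfl

lemma sin_mul_eq (a b ta tb : ℝ) :
    sinAlpha a b ta tb * (Real.sqrt (a^2 + b^2) * lenl b ta tb)
      = Real.sqrt ((a * (tb - b) + b * ta)^2) := by
  have key := InnerProductGeometry.sin_angle_mul_norm_mul_norm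
    (pt2 a 0 - pt2 0 b : E2) (pt2 ta tb - pt2 0 b : E2)
  have hu0 : (pt2 a 0 - pt2 0 b : E2) 0 = a := by simp [pt2]
  have hu1 : (pt2 a 0 - pt2 0 b : E2) 1 = -b := by simp [pt2]
  have hv0 : (pt2 ta tb - pt2 0 b : E2) 0 = ta := by simp [pt2]
  have hv1 : (pt2 ta tb - pt2 0 b : E2) 1 = tb - b := by simp [pt2]
  have hnu : ‖(pt2 a 0 - pt2 0 b : E2)‖ = Real.sqrt (a^2 + b^2) := by
    rw [EuclideanSpace.norm_eq]
    simp only [Fin.sum_univ_two, Real.norm_eq_abs, sq_abs, PiLp.sub_apply, pt2_app0, pt2_app1]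
    congr 1; ring
  have hnv : ‖(pt2 ta tb - pt2 0 b : E2)‖ = lenl b ta tb := by
    rw [EuclideanSpace.norm_eq, lenl]
    simp only [Fin.sum_univ_two, Real.norm_eq_abs, sq_abs, PiLp.sub_apply, pt2_app0, pt2_app1]
    congr 1; ring
  have hiuv : (inner ℝ (pt2 a 0 - pt2 0 b : E2) (pt2 ta tb - pt2 0 b : E2) : ℝ)
      = a * ta + (-b) * (tb - b) := by
    rw [PiLp.inner_apply]
    simp only [Fin.sum_univ_two, RCLike.inner_apply, conj_trivial, PiLp.sub_apply,
      pt2_app0, pt2_app1]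
    ring
  have hiuu : (inner ℝ (pt2 a 0 - pt2 0 b : E2) (pt2 a 0 - pt2 0 b : E2) : ℝ)
      = a * a + b * b := by
    rw [PiLp.inner_apply]
    simp only [Fin.sum_univ_two, RCLike.inner_apply, conj_trivial, PiLp.sub_apply,
      pt2_app0, pt2_app1]
    ring
  have hivv : (inner ℝ (pt2 ta tb - pt2 0 b : E2) (pt2 ta tb - pt2 0 b : E2) : ℝ)
      = ta * ta + (tb - b) * (tb - b) := by
    rw [PiLp.inner_apply]
    simp only [Fin.sum_univ_two, RCLike.inner_apply, conj_trivial, PiLp.sub_apply,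
      pt2_app0, pt2_app1]
    ring
  rw [hnu, hnv, hiuu, hivv, hiuv] at key
  have hang : sinAlpha a b ta tb = Real.sin (InnerProductGeometry.angle
      (pt2 a 0 - pt2 0 b : E2) (pt2 ta tb - pt2 0 b : E2)) := by
    rw [sinAlpha, EuclideanGeometry.angle, vsub_eq_sub, vsub_eq_sub]
  rw [hang, key]
  congr 1
  ring

lemma diam_ge (a b ta tb : ℝ) (ha : 0 ≤ a) (hb : 0 ≤ b) :
    a ≤ Metric.diam (quadK a b ta tb) ∧ b ≤ Metric.diam (quadK a b ta tb) := by
  have hfin : Set.Finite {pt2 0 0, pt2 a 0, pt2 ta tb, pt2 0 b} := Set.toFinite _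
  have hbdd : Bornology.IsBounded (quadK a b ta tb) :=
    (hfin.isCompact_convexHull ℝ).isBounded
  have h1 : pt2 0 0 ∈ quadK a b ta tb := subset_convexHull ℝ _ (by simp)
  have h2 : pt2 a 0 ∈ quadK a b ta tb := subset_convexHull ℝ _ (by simp)
  have h3 : pt2 0 b ∈ quadK a b ta tb := subset_convexHull ℝ _ (by simp)
  have hd1 : dist (pt2 0 0) (pt2 a 0) = a := by
    rw [EuclideanSpace.dist_eq]
    simp only [Fin.sum_univ_two, Real.dist_eq, pt2_app0, pt2_app1]
    rw [show |(0:ℝ) - a| ^ 2 + |(0:ℝ) - 0| ^ 2 = a ^ 2 by rw [sq_abs, sq_abs]; ring]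
    exact Real.sqrt_sq ha
  have hd2 : dist (pt2 0 0) (pt2 0 b) = b := by
    rw [EuclideanSpace.dist_eq]
    simp only [Fin.sum_univ_two, Real.dist_eq, pt2_app0, pt2_app1]
    rw [show |(0:ℝ) - 0| ^ 2 + |(0:ℝ) - b| ^ 2 = b ^ 2 by rw [sq_abs, sq_abs]; ring]
    exact Real.sqrt_sq hb
  constructor
  · have := Metric.dist_le_diam_of_mem hbdd h1 h2
    rwa [hd1] at this
  · have := Metric.dist_le_diam_of_mem hbdd h1 h3
    rwa [hd2] at this

set_option maxHeartbeats 1600000 in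
/-- For `1 ≤ p < 3` and convex elements `K(a,b,ta,tb)` under conditions (Δ1) and (D2)
with constant `C`: `max{a/b^{p-1}, b/a^{p-1}} · I_p ≤ C' · h / |l|^{p-1}`. -/
theorem Ip_bound_of_delta1_D2 (C p : ℝ) (hC : 0 < C) (hp1 : 1 ≤ p) (hp3 : p < 3) :
    ∃ C' : ℝ, 0 < C' ∧
      ∀ a b ta tb : ℝ, 0 < a → 0 < b → 0 < ta → 0 < tb →
        1 < ta / a + tb / b →
        ta / a ≤ C → tb / b ≤ C →
        1 / C ≤ sinAlpha a b ta tb →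
        max (a / b ^ (p - 1)) (b / a ^ (p - 1)) * Ip p a b ta tb ≤
          C' * (Metric.diam (quadK a b ta tb) / lenl b ta tb ^ (p - 1)) := by
  have hq0 : 0 ≤ p - 1 := by linarith
  have hq2 : p - 1 < 2 := by linarith
  have hhalf : (0:ℝ) < 1 - (p - 1) / 2 := by linarith
  set κ : ℝ := (1 / (1 - (p - 1) / 2)) ^ 2 with hκdef
  have hκpos : 0 < κ := by positivity
  set C₁ : ℝ := max C 1 with hC₁def
  have hC₁1 : (1:ℝ) ≤ C₁ := le_max_right _ _
  have hCC₁ : C ≤ C₁ := le_max_left _ _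
  set C₂ : ℝ := C₁ * (2 * C₁ - 1) with hC₂def
  have hC₂1 : (1:ℝ) ≤ C₂ := by nlinarith
  refine ⟨κ * C₂ ^ 2, by positivity, ?_⟩
  intro a b ta tb ha hb hta htb hconv hΔ1 hΔ2 hD2
  set L := lenl b ta tb with hLdef
  have hLpos : 0 < L := by
    rw [hLdef, lenl]
    apply Real.sqrt_pos.2
    positivity
  set h := Metric.diam (quadK a b ta tb) with hhdef
  obtain ⟨hha, hhb⟩ := diam_ge a b ta tb ha.le hb.le
  set M := max a b with hM
  set m := min a b with hm
  have hMpos : 0 < M := lt_max_of_lt_left ha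
  have hmpos : 0 < m := lt_min ha hb
  have hMh : M ≤ h := max_le hha hhb
  -- δ and its properties
  have hs : -1 < tb / b - 1 := by
    have : 0 < tb / b := div_pos htb hb
    linarith
  have ht : -1 < ta / a - 1 := by
    have : 0 < ta / a := div_pos hta ha
    linarith
  have hst : 0 < 1 + (tb / b - 1) + (ta / a - 1) := by linarith
  set δ : ℝ := 1 + (tb / b - 1) + (ta / a - 1) with hδdef
  set δ₁ : ℝ := min δ 1 with hδ₁def
  have hδ₁pos : 0 < δ₁ := lt_min hst one_pos
  -- the integral bound
  have hIple : Ip p a b ta tb ≤ κ * δ₁ ^ (-(p-1)) := by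
    have := key_int hq0 hq2 hs ht hst
    exact this
  have hIpnonneg : 0 ≤ Ip p a b ta tb := by
    rw [Ip]
    apply setIntegral_nonneg (measurableSet_Icc.prod measurableSet_Icc)
    intro z hz
    exact Real.rpow_nonneg (base_pos hs ht hst hz.1 hz.2).le _
  -- the sine bound gives L ≤ C * m * δ
  have hcross : a * (tb - b) + b * ta = a * b * δ := by
    rw [hδdef]
    field_simp
    ring
  have habδpos : 0 < a * b * δ := by positivity
  have hsinval : sinAlpha a b ta tb * (Real.sqrt (a^2 + b^2) * L) = a * b * δ := by
    rw [hLdef, sin_mul_eq, hcross, Real.sqrt_sq habδpos.le]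
  have hsqrtM : M ≤ Real.sqrt (a^2 + b^2) := by
    rw [hM]
    apply max_le
    · have h1 : Real.sqrt (a^2) ≤ Real.sqrt (a^2 + b^2) :=
        Real.sqrt_le_sqrt (by linarith [sq_nonneg b])
      rwa [Real.sqrt_sq ha.le] at h1
    · have h1 : Real.sqrt (b^2) ≤ Real.sqrt (a^2 + b^2) :=
        Real.sqrt_le_sqrt (by linarith [sq_nonneg a])
      rwa [Real.sqrt_sq hb.le] at h1
  have hsqrtpos : 0 < Real.sqrt (a^2 + b^2) := lt_of_lt_of_le hMpos hsqrtM
  have hLM : Real.sqrt (a^2 + b^2) * L ≤ C * (a * b * δ) := by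
    have h1 : (1 / C) * (Real.sqrt (a^2 + b^2) * L) ≤
        sinAlpha a b ta tb * (Real.sqrt (a^2 + b^2) * L) :=
      mul_le_mul_of_nonneg_right hD2 (by positivity)
    rw [hsinval] at h1
    have h2 := mul_le_mul_of_nonneg_left h1 hC.le
    rw [← mul_assoc, mul_one_div_cancel hC.ne', one_mul] at h2
    exact h2
  have hab : a * b = M * m := by
    rw [hM, hm]
    rcases le_total a b with hab | hab
    · rw [max_eq_right hab, min_eq_left hab]; ring
    · rw [max_eq_left hab, min_eq_right hab]
  have hδδ₁ : δ ≤ (2 * C₁ - 1) * δ₁ := by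
    rcases le_total δ 1 with hd | hd
    · rw [hδ₁def, min_eq_left hd]
      exact le_mul_of_one_le_left hst.le (by linarith)
    · rw [hδ₁def, min_eq_right hd, mul_one]
      have hA := hΔ1.trans hCC₁
      have hB := hΔ2.trans hCC₁
      rw [hδdef]; linarith
  have hLm : L ≤ C₂ * (m * δ₁) := by
    have e0 : L * M ≤ Real.sqrt (a^2 + b^2) * L := by
      rw [mul_comm]
      exact mul_le_mul_of_nonneg_right hsqrtM hLpos.le
    have h2 : L * M ≤ C * (M * m * δ) := by
      calc L * M ≤ Real.sqrt (a^2 + b^2) * L := e0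
        _ ≤ C * (a * b * δ) := hLM
        _ = C * (M * m * δ) := by rw [hab]
    have e1 : C * (M * m * δ) ≤ C₁ * (M * m * δ) :=
      mul_le_mul_of_nonneg_right hCC₁ (by positivity)
    have e2 : C₁ * (M * m * δ) ≤ C₁ * (M * m * ((2 * C₁ - 1) * δ₁)) := by
      apply mul_le_mul_of_nonneg_left _ (by positivity)
      exact mul_le_mul_of_nonneg_left hδδ₁ (by positivity)
    have e3 : C₁ * (M * m * ((2 * C₁ - 1) * δ₁)) = (C₂ * (m * δ₁)) * M := by
      rw [hC₂def]; ring
    have h3 : L * M ≤ (C₂ * (m * δ₁)) * M := by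
      rw [← e3]; exact h2.trans (e1.trans e2)
    exact le_of_mul_le_mul_right h3 hMpos
  -- rpow bounds
  have hXpos : (0:ℝ) < m ^ (p-1) := Real.rpow_pos_of_pos hmpos _
  have hYpos : (0:ℝ) < δ₁ ^ (p-1) := Real.rpow_pos_of_pos hδ₁pos _
  have hZpos : (0:ℝ) < L ^ (p-1) := Real.rpow_pos_of_pos hLpos _
  have hLq : L ^ (p-1) ≤ C₂ ^ 2 * (m ^ (p-1) * δ₁ ^ (p-1)) := by
    have h4 : L ^ (p-1) ≤ (C₂ * (m * δ₁)) ^ (p-1) := Real.rpow_le_rpow hLpos.le hLm hq0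
    rw [Real.mul_rpow (by positivity) (by positivity),
      Real.mul_rpow hmpos.le hδ₁pos.le] at h4
    have h5 : C₂ ^ (p-1) ≤ C₂ ^ (2:ℝ) :=
      Real.rpow_le_rpow_of_exponent_le hC₂1 (by linarith)
    have h6 : C₂ ^ (2:ℝ) = C₂ ^ 2 := by
      rw [← Real.rpow_natCast C₂ 2]; norm_num
    rw [h6] at h5
    calc L ^ (p-1) ≤ C₂ ^ (p-1) * (m ^ (p-1) * δ₁ ^ (p-1)) := h4
      _ ≤ C₂ ^ 2 * (m ^ (p-1) * δ₁ ^ (p-1)) := by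
          exact mul_le_mul_of_nonneg_right h5 (by positivity)
  have hmax : max (a / b ^ (p-1)) (b / a ^ (p-1)) ≤ M / m ^ (p-1) := by
    apply max_le
    · exact div_le_div₀ hMpos.le (le_max_left a b) hXpos
        (Real.rpow_le_rpow hmpos.le (min_le_right a b) hq0)
    · exact div_le_div₀ hMpos.le (le_max_right a b) hXpos
        (Real.rpow_le_rpow hmpos.le (min_le_left a b) hq0)
  have hmaxnn : 0 ≤ max (a / b ^ (p-1)) (b / a ^ (p-1)) :=
    le_trans (le_of_lt (div_pos ha (Real.rpow_pos_of_pos hb _))) (le_max_left _ _)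
  have key2 : M * L ^ (p-1) ≤ h * (C₂ ^ 2 * (m ^ (p-1) * δ₁ ^ (p-1))) := by
    have k1 : M * L ^ (p-1) ≤ M * (C₂ ^ 2 * (m ^ (p-1) * δ₁ ^ (p-1))) :=
      mul_le_mul_of_nonneg_left hLq hMpos.le
    have k2 : M * (C₂ ^ 2 * (m ^ (p-1) * δ₁ ^ (p-1))) ≤
        h * (C₂ ^ 2 * (m ^ (p-1) * δ₁ ^ (p-1))) :=
      mul_le_mul_of_nonneg_right hMh (by positivity)
    linarith
  calc max (a / b ^ (p-1)) (b / a ^ (p-1)) * Ip p a b ta tb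
      ≤ (M / m ^ (p-1)) * (κ * δ₁ ^ (-(p-1))) :=
        mul_le_mul hmax hIple hIpnonneg (by positivity)
    _ ≤ κ * C₂ ^ 2 * (h / L ^ (p-1)) := by
        rw [Real.rpow_neg hδ₁pos.le]
        rw [show (M / m ^ (p-1)) * (κ * (δ₁ ^ (p-1))⁻¹)
            = (κ * M) / (m ^ (p-1) * δ₁ ^ (p-1)) by
          field_simp]
        rw [show κ * C₂ ^ 2 * (h / L ^ (p-1)) = (κ * C₂ ^ 2 * h) / L ^ (p-1) by ring]
        rw [div_le_div_iff₀ (by positivity) hZpos]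
        have k3 := mul_le_mul_of_nonneg_left key2 hκpos.le
        ring_nf at k3 ⊢
        linarith [k3]
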